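/- Let d ≥ 1 and let X be an aperiodic minimal subshift over a nonempty finite alphabet. Then the suspension SX has a local product (solenoid) structure: for every T ∈ SX there exist ε > 0, a nonempty clopen subset K ⊆ X, an open set V ⊆ SX containing T, and a homeomorphism φ : B(0, ε) × K → V (where B(0, ε) is the open Euclidean ball in ℝ^d and K carries the subspace topology) such that φ commutes with translation whenever defined: φ(x + t, ξ) = t +ᵥ φ(x, ξ) for all ξ ∈ K and all x, t with x ∈ B(0, ε) and x + t ∈ B(0, ε). -/

import Mathlib

open Filter Topology

abbrev Zd (d : ℕ) := Fin d → ℤ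
abbrev Rd (d : ℕ) := EuclideanSpace ℝ (Fin d)

def toRd {d : ℕ} (n : Zd d) : Rd d := WithLp.toLp 2 (fun i => (n i : ℝ))

def shift {d : ℕ} {A : Type*} (n : Zd d) (ω : Zd d → A) : Zd d → A := fun k => ω (k - n)

structure IsSubshift {d : ℕ} {A : Type*} [TopologicalSpace A] (X : Set (Zd d → A)) : Prop where
  nonempty : X.Nonempty
  closed : IsClosed X
  shift_mem : ∀ n : Zd d, ∀ ω ∈ X, shift n ω ∈ X

def IsMinimal {d : ℕ} {A : Type*} [TopologicalSpace A] (X : Set (Zd d → A)) : Prop :=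
  ∀ ω ∈ X, X ⊆ closure {ω' | ∃ n : Zd d, ω' = shift n ω}

def IsAperiodic {d : ℕ} {A : Type*} (X : Set (Zd d → A)) : Prop :=
  ∀ ω ∈ X, ∀ n : Zd d, shift n ω = ω → n = 0

def suspRel {d : ℕ} {A : Type*} [TopologicalSpace A] (X : Set (Zd d → A)) :
    X × Rd d → X × Rd d → Prop :=
  fun p q => ∃ n : Zd d, (q.1 : Zd d → A) = shift n (p.1 : Zd d → A) ∧ q.2 = p.2 - toRd n

abbrev Susp {d : ℕ} {A : Type*} [TopologicalSpace A] (X : Set (Zd d → A)) :=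
  Quot (suspRel X)

instance {d : ℕ} {A : Type*} [TopologicalSpace A] (X : Set (Zd d → A)) :
    VAdd (Rd d) (Susp X) where
  vadd t := Quot.lift (fun p => Quot.mk (suspRel X) (p.1, p.2 + t))
    (fun p q hpq => by
      obtain ⟨n, h1, h2⟩ := hpq
      exact Quot.sound ⟨n, h1, by rw [h2]; exact sub_add_eq_add_sub _ _ _⟩)

def iota {d : ℕ} {A : Type*} [TopologicalSpace A] (X : Set (Zd d → A)) : X → Susp X :=
  fun ω => Quot.mk _ (ω, 0)

def box (d : ℕ) (n : ℕ) : Set (Zd d) := {k | ∀ i, |k i| ≤ (n : ℤ)}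

noncomputable def complexity {d : ℕ} {A : Type*} (X : Set (Zd d → A)) (n : ℕ) : ℕ :=
  Set.ncard ((fun ω => (fun k : box d n => ω k.1)) '' X)

noncomputable def repetitivity {d : ℕ} {A : Type*} (X : Set (Zd d → A)) (n : ℕ) : ℝ :=
  sInf {C : ℝ | 0 ≤ C ∧ ∀ ω ∈ X, ∀ ω₀ ∈ X, ∃ k : Zd d,
    ‖toRd k‖ ≤ C ∧ ∀ j ∈ box d n, shift k ω j = ω₀ j}

def IsCocycleFor {d : ℕ} {A A' : Type*} [TopologicalSpace A] [TopologicalSpace A']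
    {X : Set (Zd d → A)} {X' : Set (Zd d → A')}
    (h : Susp X ≃ₜ Susp X') (c : Susp X × Rd d → Rd d) : Prop :=
  ∀ (T : Susp X) (x : Rd d), h (x +ᵥ T) = c (T, x) +ᵥ h T

/-! ### Auxiliary lemmas -/

section Aux

variable {d : ℕ} {A : Type*}

lemma shift_shift (n m : Zd d) (ω : Zd d → A) : shift m (shift n ω) = shift (n + m) ω := by
  funext k; simp [shift, sub_sub, add_comm]

lemma shift_zero' (ω : Zd d → A) : shift (0 : Zd d) ω = ω := by
  funext k; simp [shift]

lemma toRd_add (n m : Zd d) : toRd (n + m) = toRd n + toRd m := by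
  ext i; simp [toRd]

lemma toRd_zero : toRd (0 : Zd d) = 0 := by
  ext i; simp [toRd]

lemma one_le_norm_toRd {n : Zd d} (hn : n ≠ 0) : 1 ≤ ‖toRd n‖ := by
  obtain ⟨i, hi⟩ : ∃ i, n i ≠ 0 := by
    by_contra h; push_neg at h; exact hn (funext h)
  rw [EuclideanSpace.norm_eq]
  have h1 : (1 : ℝ) ≤ ‖toRd n i‖ ^ 2 := by
    have : (1 : ℝ) ≤ |(n i : ℝ)| := by exact_mod_cast Int.one_le_abs hi
    have h2 : (1 : ℝ) ≤ ‖toRd n i‖ := by simpa [toRd, Real.norm_eq_abs] using this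
    nlinarith
  have h3 : (1 : ℝ) ≤ ∑ j, ‖toRd n j‖ ^ 2 :=
    h1.trans (Finset.single_le_sum (f := fun j => ‖toRd n j‖ ^ 2)
      (fun j _ => sq_nonneg _) (Finset.mem_univ i))
  calc (1 : ℝ) = Real.sqrt 1 := Real.sqrt_one.symm
    _ ≤ Real.sqrt (∑ j, ‖toRd n j‖ ^ 2) := Real.sqrt_le_sqrt h3

variable [TopologicalSpace A] {X : Set (Zd d → A)}

lemma suspRel_equivalence : Equivalence (suspRel X) := by
  constructor
  · intro p
    exact ⟨0, (shift_zero' _).symm, by rw [toRd_zero, sub_zero]⟩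
  · rintro p q ⟨n, h1, h2⟩
    refine ⟨-n, ?_, ?_⟩
    · rw [h1, shift_shift, add_neg_cancel, shift_zero']
    · have : toRd (-n) = -toRd n := by ext i; simp [toRd]
      rw [h2, this]; abel
  · rintro p q r ⟨n, h1, h2⟩ ⟨m, h3, h4⟩
    refine ⟨n + m, ?_, ?_⟩
    · rw [h3, h1, shift_shift]
    · rw [h4, h2, toRd_add]; abel

/-- The `Zd d`-action on `X × Rd d`. -/
noncomputable def Sact (hX : IsSubshift X) (n : Zd d) (p : X × Rd d) : X × Rd d :=
  (⟨shift n p.1.1, hX.shift_mem n _ p.1.2⟩, p.2 - toRd n)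

lemma continuous_shift (n : Zd d) : Continuous (shift n : (Zd d → A) → Zd d → A) :=
  continuous_pi fun k => continuous_apply (k - n)

lemma continuous_Sact (hX : IsSubshift X) (n : Zd d) : Continuous (Sact hX n) := by
  refine Continuous.prodMk ?_ (continuous_snd.sub continuous_const)
  exact Continuous.subtype_mk
    ((continuous_shift n).comp (continuous_subtype_val.comp continuous_fst)) _

lemma Sact_Sact (hX : IsSubshift X) (n m : Zd d) (p : X × Rd d) :
    Sact hX m (Sact hX n p) = Sact hX (n + m) p := by
  refine Prod.ext (Subtype.ext ?_) ?_
  · exact shift_shift n m p.1.1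
  · simp only [Sact, toRd_add]; abel

lemma Sact_zero (hX : IsSubshift X) (p : X × Rd d) : Sact hX 0 p = p := by
  refine Prod.ext (Subtype.ext ?_) ?_
  · exact shift_zero' p.1.1
  · simp [Sact, toRd_zero]

lemma suspRel_iff (hX : IsSubshift X) (p q : X × Rd d) :
    suspRel X p q ↔ ∃ n : Zd d, q = Sact hX n p := by
  constructor
  · rintro ⟨n, h1, h2⟩
    exact ⟨n, Prod.ext (Subtype.ext h1) h2⟩
  · rintro ⟨n, rfl⟩
    exact ⟨n, rfl, rfl⟩

lemma isOpenMap_quot_mk (hX : IsSubshift X) : IsOpenMap (Quot.mk (suspRel X)) := by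
  intro U hU
  rw [← isQuotientMap_quot_mk.isOpen_preimage]
  have key : Quot.mk (suspRel X) ⁻¹' (Quot.mk (suspRel X) '' U) = ⋃ n : Zd d, Sact hX n '' U := by
    ext p
    simp only [Set.mem_preimage, Set.mem_image, Set.mem_iUnion]
    constructor
    · rintro ⟨q, hq, hEq⟩
      have hrel : suspRel X q p :=
        (suspRel_equivalence.eqvGen_iff).mp (Quot.eq.mp hEq)
      obtain ⟨n, rfl⟩ := (suspRel_iff hX q p).mp hrel
      exact ⟨n, q, hq, rfl⟩
    · rintro ⟨n, q, hq, rfl⟩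
      exact ⟨q, hq, Quot.sound ((suspRel_iff hX q _).mpr ⟨n, rfl⟩)⟩
  rw [key]
  refine isOpen_iUnion fun n => ?_
  have himg : Sact hX n '' U = Sact hX (-n) ⁻¹' U := by
    ext p
    constructor
    · rintro ⟨u, hu, rfl⟩
      simpa [Set.mem_preimage, Sact_Sact, Sact_zero] using hu
    · intro hp
      refine ⟨Sact hX (-n) p, hp, ?_⟩
      rw [Sact_Sact, neg_add_cancel, Sact_zero]
  rw [himg]
  exact hU.preimage (continuous_Sact hX (-n))

lemma isOpenMap_rangeFactorization {α β : Type*} [TopologicalSpace α] [TopologicalSpace β]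
    {f : α → β} (hf : IsOpenMap f) : IsOpenMap (Set.rangeFactorization f) := by
  intro U hU
  have h2 : Set.rangeFactorization f '' U = Subtype.val ⁻¹' (f '' U) := by
    ext ⟨v, hv⟩
    simp [Set.rangeFactorization, Subtype.ext_iff, eq_comm]
  rw [h2]
  exact (hf U hU).preimage continuous_subtype_val

end Aux

theorem suspension_local_product_structure
    {d : ℕ} (hd : 1 ≤ d)
    {A : Type*} [Fintype A] [Nonempty A] [TopologicalSpace A] [DiscreteTopology A]
    (X : Set (Zd d → A))
    (hX : IsSubshift X) (hXmin : IsMinimal X) (hXap : IsAperiodic X) :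
    ∀ T : Susp X, ∃ ε : ℝ, 0 < ε ∧ ∃ K : Set X, K.Nonempty ∧ IsClopen K ∧
      ∃ V : Set (Susp X), IsOpen V ∧ T ∈ V ∧
        ∃ φ : (Metric.ball (0 : Rd d) ε) × K ≃ₜ V,
          ∀ (ξ : K) (x t : Rd d) (hx : x ∈ Metric.ball (0 : Rd d) ε)
            (hxt : x + t ∈ Metric.ball (0 : Rd d) ε),
            (φ (⟨x + t, hxt⟩, ξ) : Susp X) = t +ᵥ (φ (⟨x, hx⟩, ξ) : Susp X) := by
  intro T
  obtain ⟨⟨ω₀, x₀⟩, rfl⟩ := Quot.exists_rep T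
  refine ⟨1/2, by norm_num, Set.univ, ⟨ω₀, trivial⟩, isClopen_univ, ?_⟩
  set ψ : (Metric.ball (0 : Rd d) (1/2)) × (Set.univ : Set X) → Susp X :=
    fun p => Quot.mk (suspRel X) (p.2.1, x₀ + p.1.1) with hψdef
  have hcont : Continuous ψ := by
    refine continuous_quot_mk.comp (Continuous.prodMk ?_ ?_)
    · exact continuous_subtype_val.comp continuous_snd
    · exact continuous_const.add (continuous_subtype_val.comp continuous_fst)
  have hj : IsOpenMap (fun (p : (Metric.ball (0 : Rd d) (1/2)) × (Set.univ : Set X)) =>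
      ((p.2.1 : X), x₀ + (p.1.1 : Rd d))) := by
    have h1 : IsOpenMap (Prod.map (Subtype.val : ↥(Set.univ : Set X) → X)
        (fun (y : (Metric.ball (0 : Rd d) (1/2))) => x₀ + y.1)) := by
      refine IsOpenMap.prodMap (isOpen_univ.isOpenMap_subtype_val) ?_
      exact (Homeomorph.addLeft x₀).isOpenMap.comp Metric.isOpen_ball.isOpenMap_subtype_val
    exact h1.comp (Homeomorph.prodComm _ _).isOpenMap
  have hopen : IsOpenMap ψ := (isOpenMap_quot_mk hX).comp hj
  have hinj : Function.Injective ψ := by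
    rintro p q h
    have hrel : suspRel X (p.2.1, x₀ + p.1.1) (q.2.1, x₀ + q.1.1) :=
      (suspRel_equivalence.eqvGen_iff).mp (Quot.eq.mp h)
    obtain ⟨n, h1, h2⟩ := hrel
    dsimp only at h1 h2
    have hn : n = 0 := by
      by_contra hn0
      have h3 : toRd n = (p.1.1 : Rd d) - q.1.1 := by
        have h4 : toRd n = (x₀ + (p.1.1 : Rd d)) - (x₀ + q.1.1) := by rw [h2]; abel
        rw [h4]; abel
      have hp : ‖(p.1.1 : Rd d)‖ < 1/2 := by
        have := p.1.2; rwa [Metric.mem_ball, dist_zero_right] at this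
      have hq : ‖(q.1.1 : Rd d)‖ < 1/2 := by
        have := q.1.2; rwa [Metric.mem_ball, dist_zero_right] at this
      have : ‖toRd n‖ < 1 := by
        rw [h3]
        calc ‖(p.1.1 : Rd d) - q.1.1‖ ≤ ‖(p.1.1 : Rd d)‖ + ‖(q.1.1 : Rd d)‖ := norm_sub_le _ _
          _ < 1 := by linarith
      exact absurd this (not_lt.mpr (one_le_norm_toRd hn0))
    subst hn
    rw [shift_zero'] at h1
    rw [toRd_zero, sub_zero] at h2
    have hfst : p.1 = q.1 := Subtype.ext (add_left_cancel h2).symm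
    have hsnd : p.2 = q.2 := Subtype.ext (Subtype.ext h1.symm)
    exact Prod.ext hfst hsnd
  refine ⟨Set.range ψ, hopen.isOpen_range, ?_, ?_⟩
  · refine ⟨(⟨0, Metric.mem_ball_self (by norm_num)⟩, ⟨ω₀, trivial⟩), ?_⟩
    show Quot.mk (suspRel X) (ω₀, x₀ + 0) = Quot.mk (suspRel X) (ω₀, x₀)
    rw [add_zero]
  · refine ⟨Equiv.toHomeomorphOfContinuousOpen
      (Equiv.ofBijective (Set.rangeFactorization ψ)
        ⟨fun a b hab => hinj (congrArg Subtype.val hab), Set.rangeFactorization_surjective⟩)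
      (hcont.subtype_mk _) (isOpenMap_rangeFactorization hopen), ?_⟩
    intro ξ x t hx hxt
    show Quot.mk (suspRel X) (ξ.1, x₀ + (x + t)) = t +ᵥ Quot.mk (suspRel X) (ξ.1, x₀ + x)
    show Quot.mk (suspRel X) (ξ.1, x₀ + (x + t)) = Quot.mk (suspRel X) (ξ.1, (x₀ + x) + t)
    rw [add_assoc]
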